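/- The function φ(t, ω) = φ₀(F̄(t) ⊙ ω) · exp(−½ Σᵢ ωᵢ² Ḡᵢ(t)²), where F̄ᵢ(t) = exp(∫₀ᵗ fᵢ(s)ds) and Ḡᵢ(t)² = F̄ᵢ(t)² ∫₀ᵗ gᵢ(s)²/F̄ᵢ(s)² ds, solves ∂ₜφ = Σᵢ ωᵢ fᵢ(t) ∂_{ωᵢ}φ − ½ (Σᵢ ωᵢ² gᵢ(t)²) φ with initial condition φ(0, ·) = φ₀. -/

import Mathlib

open MeasureTheory Real intervalIntegral

/-- Complex partial derivative `∂_{ωᵢ} φ` for `φ : (Fin D → ℝ) → ℂ`. -/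
noncomputable def pderivC {D : ℕ} (φ : (Fin D → ℝ) → ℂ) (i : Fin D) (ω : Fin D → ℝ) : ℂ :=
  fderiv ℝ φ ω (Pi.single i 1)

set_option maxHeartbeats 1000000 in
/-- Method-of-characteristics solution of the Fourier-domain
Fokker–Planck equation. With `F̄ᵢ(t) = exp(∫₀ᵗ fᵢ)` and
`Ḡᵢ(t)² = F̄ᵢ(t)² ∫₀ᵗ gᵢ²/F̄ᵢ²`, the function
`φ(t,ω) = φ₀(F̄(t) ⊙ ω) exp(−½ Σᵢ ωᵢ² Ḡᵢ(t)²)` solves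
`∂ₜφ = Σᵢ ωᵢ fᵢ ∂_{ωᵢ}φ − ½ (Σᵢ ωᵢ² gᵢ²) φ` with `φ(0,·) = φ₀`. -/
theorem characteristics_solution {D : ℕ} (f g : Fin D → ℝ → ℝ)
    (hf : ∀ i, Continuous (f i)) (hg : ∀ i, Continuous (g i))
    (φ₀ : (Fin D → ℝ) → ℂ) (hφ₀ : ContDiff ℝ 1 φ₀)
    (Fb G2 : Fin D → ℝ → ℝ)
    (hFb : ∀ i t, Fb i t = Real.exp (∫ s in (0:ℝ)..t, f i s))
    (hG2 : ∀ i t, G2 i t = (Fb i t) ^ 2 * ∫ s in (0:ℝ)..t, (g i s) ^ 2 / (Fb i s) ^ 2)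
    (φ : ℝ → (Fin D → ℝ) → ℂ)
    (hφ : ∀ t ω, φ t ω = φ₀ (fun i => Fb i t * ω i) *
      Complex.exp (-(1 / 2 : ℂ) * ((∑ i, (ω i) ^ 2 * G2 i t : ℝ) : ℂ))) :
    (∀ ω, φ 0 ω = φ₀ ω) ∧
    ∀ t ω, HasDerivAt (fun s => φ s ω)
      ((∑ i, ((ω i * f i t : ℝ) : ℂ) * pderivC (φ t) i ω)
        - (1 / 2 : ℂ) * ((∑ i, (ω i) ^ 2 * (g i t) ^ 2 : ℝ) : ℂ) * φ t ω) t := by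
  have hFbpos : ∀ i s, 0 < Fb i s := fun i s => by rw [hFb]; exact Real.exp_pos _
  have hFbderiv : ∀ i t, HasDerivAt (Fb i) (f i t * Fb i t) t := by
    intro i t
    have hJ : HasDerivAt (fun u => ∫ s in (0:ℝ)..u, f i s) (f i t) t :=
      intervalIntegral.integral_hasDerivAt_right ((hf i).intervalIntegrable _ _)
        ((hf i).stronglyMeasurableAtFilter _ _) (hf i).continuousAt
    have h := hJ.exp
    have hfun : (fun u => Real.exp (∫ s in (0:ℝ)..u, f i s)) = Fb i := by
      ext u; rw [hFb]
    rw [hfun] at h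
    rw [hFb i t]
    convert h using 1
    ring
  have hFbcont : ∀ i, Continuous (Fb i) :=
    fun i => continuous_iff_continuousAt.2 fun s => (hFbderiv i s).continuousAt
  have hG2deriv : ∀ i t, HasDerivAt (G2 i) (2 * f i t * G2 i t + g i t ^ 2) t := by
    intro i t
    have hcont : Continuous fun s => g i s ^ 2 / Fb i s ^ 2 :=
      ((hg i).pow 2).div ((hFbcont i).pow 2) (fun s => pow_ne_zero _ (hFbpos i s).ne')
    have hI : HasDerivAt (fun u => ∫ s in (0:ℝ)..u, g i s ^ 2 / Fb i s ^ 2)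
        (g i t ^ 2 / Fb i t ^ 2) t :=
      intervalIntegral.integral_hasDerivAt_right (hcont.intervalIntegrable _ _)
        (hcont.stronglyMeasurableAtFilter _ _) hcont.continuousAt
    have hsq : HasDerivAt (fun u => Fb i u ^ 2) (2 * Fb i t ^ 1 * (f i t * Fb i t)) t :=
      (hFbderiv i t).pow 2
    have h : HasDerivAt (fun u => Fb i u ^ 2 * ∫ s in (0:ℝ)..u, g i s ^ 2 / Fb i s ^ 2) _ t := hsq.mul hI
    have hfun : (fun u => Fb i u ^ 2 * ∫ s in (0:ℝ)..u, g i s ^ 2 / Fb i s ^ 2) = G2 i := by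
      ext u; rw [hG2]
    rw [hfun] at h
    convert h using 1
    rw [hG2 i t]
    have hne : Fb i t ≠ 0 := (hFbpos i t).ne'
    field_simp
  constructor
  · intro ω
    rw [hφ]
    have h1 : ∀ i, Fb i 0 = 1 := fun i => by simp [hFb]
    have h2 : ∀ i, G2 i 0 = 0 := fun i => by simp [hG2]
    simp [h1, h2]
  intro t ω
  have hφ₀d : Differentiable ℝ φ₀ := hφ₀.differentiable one_ne_zero
  set P : Fin D → ℝ := fun j => Fb j t * ω j with hP
  set E : ℂ := Complex.exp (-(1 / 2 : ℂ) * ((∑ i, (ω i) ^ 2 * G2 i t : ℝ) : ℂ)) with hE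
  set Dv : Fin D → ℂ := fun i => fderiv ℝ φ₀ P (Pi.single i 1) with hDv
  ---- Step 1: compute pderivC (φ t) i ω
  have hpd : ∀ i, pderivC (φ t) i ω =
      (Fb i t : ℂ) * Dv i * E + φ₀ P * (-(1 / 2 : ℂ) * (2 * ω i * G2 i t)) * E := by
    intro i
    have hLfun : (fun w : Fin D → ℝ => fun j => Fb j t * w j)
        = ⇑(ContinuousLinearMap.pi (R := ℝ)
          (fun j => Fb j t • (ContinuousLinearMap.proj j : (Fin D → ℝ) →L[ℝ] ℝ))) := by
      ext w j; simp
    set L := ContinuousLinearMap.pi (R := ℝ)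
      (fun j => Fb j t • (ContinuousLinearMap.proj j : (Fin D → ℝ) →L[ℝ] ℝ)) with hLdef
    have hL : HasFDerivAt (fun w : Fin D → ℝ => fun j => Fb j t * w j) L ω := by
      rw [hLfun]; exact ContinuousLinearMap.hasFDerivAt _
    have hcomp : HasFDerivAt (fun w : Fin D → ℝ => φ₀ (fun j => Fb j t * w j))
        ((fderiv ℝ φ₀ P).comp L) ω := ((hφ₀d P).hasFDerivAt).comp ω hL
    set R := ∑ j, G2 j t • ((2 * ω j) • (ContinuousLinearMap.proj j : (Fin D → ℝ) →L[ℝ] ℝ))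
      with hR
    have hr : HasFDerivAt (fun w : Fin D → ℝ => ∑ j, w j ^ 2 * G2 j t) R ω := by
      apply HasFDerivAt.fun_sum
      intro j _
      have h2 : HasFDerivAt (fun w : Fin D → ℝ => w j * w j * G2 j t) _ ω := (((ContinuousLinearMap.proj j : (Fin D → ℝ) →L[ℝ] ℝ).hasFDerivAt (x := ω)).mul
        ((ContinuousLinearMap.proj j : (Fin D → ℝ) →L[ℝ] ℝ).hasFDerivAt (x := ω))).mul_const
        (G2 j t)
      have hfe : (fun w : Fin D → ℝ => w j ^ 2 * G2 j t) = fun w => w j * w j * G2 j t := by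
        ext w; ring
      rw [hfe]
      refine h2.congr_fderiv ?_
      ext w; simp [ContinuousLinearMap.proj_apply]; ring
    have hq : HasFDerivAt
        (fun w : Fin D → ℝ => -(1 / 2 : ℂ) * ((∑ j, w j ^ 2 * G2 j t : ℝ) : ℂ))
        ((-(1 / 2 : ℂ)) • (Complex.ofRealCLM.comp R)) ω :=
      (Complex.ofRealCLM.hasFDerivAt.comp ω hr).const_mul (-(1 / 2 : ℂ))
    have hexp := hq.cexp
    have hmul : HasFDerivAt (fun w : Fin D → ℝ => φ₀ (fun j => Fb j t * w j) *
        Complex.exp (-(1 / 2 : ℂ) * ((∑ j, w j ^ 2 * G2 j t : ℝ) : ℂ))) _ ω := hcomp.mul hexp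
    have hφfun : (φ t) = fun w => φ₀ (fun j => Fb j t * w j) *
        Complex.exp (-(1 / 2 : ℂ) * ((∑ j, w j ^ 2 * G2 j t : ℝ) : ℂ)) := by
      ext w; rw [hφ]
    rw [pderivC, hφfun, hmul.fderiv]
    have hLapp : L (Pi.single i 1) = Pi.single i (Fb i t) := by
      ext j
      show Fb j t * (Pi.single i 1 : Fin D → ℝ) j = _
      by_cases h : j = i
      · subst h; simp
      · simp [Pi.single_apply, h]
    have hRapp : R (Pi.single i 1) = 2 * ω i * G2 i t := by
      rw [hR]
      simp only [ContinuousLinearMap.sum_apply, ContinuousLinearMap.smul_apply,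
        ContinuousLinearMap.proj_apply, Pi.single_apply]
      rw [Finset.sum_eq_single i]
      · simp; ring
      · intro b _ hb; simp [hb]
      · simp
    have hDapp : (fderiv ℝ φ₀ P) (Pi.single i (Fb i t)) = (Fb i t : ℂ) * Dv i := by
      have hs : (Pi.single i (Fb i t) : Fin D → ℝ) = Fb i t • (Pi.single i (1:ℝ) : Fin D → ℝ) := by
        ext j
        by_cases h : j = i
        · subst h; simp
        · simp [Pi.single_apply, h]
      rw [hs, (fderiv ℝ φ₀ P).map_smul, hDv]
      simp [Complex.real_smul]
    simp only [ContinuousLinearMap.add_apply, ContinuousLinearMap.smul_apply,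
      ContinuousLinearMap.comp_apply, Complex.ofRealCLM_apply]
    rw [hLapp, hDapp, hRapp]
    have hEeq : Complex.exp (-(1 / 2 : ℂ) * ((∑ j, ω j ^ 2 * G2 j t : ℝ) : ℂ)) = E := by
      rw [hE]
    rw [hEeq]
    simp only [smul_eq_mul]
    push_cast
    ring
  ---- Step 2: time derivative
  have hγ : HasDerivAt (fun s => (fun j => Fb j s * ω j)) (fun j => f j t * Fb j t * ω j) t := by
    rw [hasDerivAt_pi]
    intro j
    exact (hFbderiv j t).mul_const (ω j)
  have h1 : HasDerivAt (fun s => φ₀ (fun j => Fb j s * ω j))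
      ((fderiv ℝ φ₀ P) (fun j => f j t * Fb j t * ω j)) t :=
    ((hφ₀d P).hasFDerivAt).comp_hasDerivAt t hγ
  have h2 : HasDerivAt (fun s => (∑ i, (ω i) ^ 2 * G2 i s : ℝ))
      (∑ i, ω i ^ 2 * (2 * f i t * G2 i t + g i t ^ 2)) t := by
    apply HasDerivAt.fun_sum
    intro i _
    exact (hG2deriv i t).const_mul _
  have h3 : HasDerivAt
      (fun s => Complex.exp (-(1 / 2 : ℂ) * ((∑ i, (ω i) ^ 2 * G2 i s : ℝ) : ℂ)))
      (E * (-(1 / 2 : ℂ) * ((∑ i, ω i ^ 2 * (2 * f i t * G2 i t + g i t ^ 2) : ℝ) : ℂ))) t := by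
    have hc : HasDerivAt (fun s => ((∑ i, (ω i) ^ 2 * G2 i s : ℝ) : ℂ))
        ((∑ i, ω i ^ 2 * (2 * f i t * G2 i t + g i t ^ 2) : ℝ) : ℂ) t :=
      Complex.ofRealCLM.hasFDerivAt.comp_hasDerivAt t h2
    have := (hc.const_mul (-(1 / 2 : ℂ))).cexp
    convert this using 1
  have h4 : HasDerivAt (fun s => φ₀ (fun j => Fb j s * ω j) *
      Complex.exp (-(1 / 2 : ℂ) * ((∑ i, (ω i) ^ 2 * G2 i s : ℝ) : ℂ))) _ t := h1.mul h3
  have hφfun2 : (fun s => φ s ω) = fun s => φ₀ (fun j => Fb j s * ω j) *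
      Complex.exp (-(1 / 2 : ℂ) * ((∑ i, (ω i) ^ 2 * G2 i s : ℝ) : ℂ)) := by
    ext s; rw [hφ]
  rw [hφfun2]
  convert h4 using 1
  ---- Step 3: algebra
  have hfd : (fderiv ℝ φ₀ P) (fun j => f j t * Fb j t * ω j)
      = ∑ i, ((f i t * Fb i t * ω i : ℝ) : ℂ) * Dv i := by
    have hv : (fun j => f j t * Fb j t * ω j) = ∑ i, Pi.single i (f i t * Fb i t * ω i) := by
      rw [Finset.univ_sum_single (fun j => f j t * Fb j t * ω j)]
    rw [hv, map_sum]
    apply Finset.sum_congr rfl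
    intro i _
    have hs : (Pi.single i (f i t * Fb i t * ω i) : Fin D → ℝ)
        = (f i t * Fb i t * ω i) • (Pi.single i (1:ℝ) : Fin D → ℝ) := by
      ext j
      by_cases h : j = i
      · subst h; simp
      · simp [Pi.single_apply, h]
    rw [hs, (fderiv ℝ φ₀ P).map_smul]
    simp [Complex.real_smul, hDv]
  have hφtω : φ t ω = φ₀ P * E := by rw [hφ]
  rw [← hE] at *
  rw [hφtω, hfd]
  simp only [hpd]
  have hsplit : (∑ i, ω i ^ 2 * (2 * f i t * G2 i t + g i t ^ 2) : ℝ)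
      = (∑ i, ω i ^ 2 * (2 * f i t * G2 i t) : ℝ) + (∑ i, ω i ^ 2 * g i t ^ 2 : ℝ) := by
    rw [← Finset.sum_add_distrib]
    apply Finset.sum_congr rfl
    intro i _; ring
  rw [hsplit]
  simp only [mul_add, Finset.sum_add_distrib]
  have e1 : (∑ i, ((ω i * f i t : ℝ) : ℂ) * ((Fb i t : ℂ) * Dv i * E))
      = (∑ i, ((f i t * Fb i t * ω i : ℝ) : ℂ) * Dv i) * E := by
    rw [Finset.sum_mul]
    apply Finset.sum_congr rfl
    intro i _
    push_cast
    ring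
  have e2 : (∑ i, ((ω i * f i t : ℝ) : ℂ) * (φ₀ P * (-(1 / 2 : ℂ) * (2 * ω i * G2 i t)) * E))
      = φ₀ P * (E * (-(1 / 2 : ℂ) * ((∑ i, ω i ^ 2 * (2 * f i t * G2 i t) : ℝ) : ℂ))) := by
    have hc : ((∑ i, ω i ^ 2 * (2 * f i t * G2 i t) : ℝ) : ℂ)
        = ∑ i, ((ω i : ℂ) ^ 2 * (2 * f i t * G2 i t)) := by
      push_cast; rfl
    rw [hc, Finset.mul_sum, Finset.mul_sum, Finset.mul_sum]
    apply Finset.sum_congr rfl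
    intro i _
    push_cast
    ring
  rw [e1, e2]
  push_cast
  ring
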